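/- Let D = (V,A) be a bipartite digraph with sources S and sinks T, and let b ∈ ℤ^V with b_v = 1 for every sink v and b_u ≥ 1 for every source u. Suppose b(S) = b(T) and b(U ∩ S) − b(U ∩ T) ≥ 1 for every nonempty proper U ⊂ V with δ⁻(U) = ∅. Then for every arc a = (u,w) ∈ A, there exists a perfect b-matching x ∈ {0,1}^A with x_a = 1. -/

import Mathlib

open scoped Classical

noncomputable section

variable {V A : Type*}

/-- Arcs leaving `U`: tail in `U`, head outside `U`. -/
def deltaPlus [Fintype A] [DecidableEq V] (tl hd : A → V) (U : Finset V) : Finset A :=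
  Finset.univ.filter (fun a => tl a ∈ U ∧ hd a ∉ U)

/-- Arcs entering `U`: head in `U`, tail outside `U`. -/
def deltaMinus [Fintype A] [DecidableEq V] (tl hd : A → V) (U : Finset V) : Finset A :=
  Finset.univ.filter (fun a => hd a ∈ U ∧ tl a ∉ U)

/-- A source has no incoming arcs. -/
def IsSource (tl hd : A → V) (v : V) : Prop := ∀ a, hd a ≠ v

/-- A sink has no outgoing arcs. -/
def IsSink (tl hd : A → V) (v : V) : Prop := ∀ a, tl a ≠ v

/-- The set of arcs incident to a vertex. -/
def deltaV [Fintype A] [DecidableEq V] (tl hd : A → V) (v : V) : Finset A :=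
  Finset.univ.filter (fun a => tl a = v ∨ hd a = v)

theorem stmt7 [Fintype V] [Fintype A] [DecidableEq V] (tl hd : A → V)
    (hbip : ∀ v : V, IsSource tl hd v ∨ IsSink tl hd v)
    (b : V → ℤ)
    (hbT : ∀ v, IsSink tl hd v → b v = 1)
    (hbS : ∀ v, IsSource tl hd v → 1 ≤ b v)
    (hbal : ∑ v ∈ Finset.univ.filter (IsSource tl hd), b v =
            ∑ v ∈ Finset.univ.filter (IsSink tl hd), b v)
    (hcut : ∀ U : Finset V, U.Nonempty → U ≠ Finset.univ → deltaMinus tl hd U = ∅ →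
      1 ≤ (∑ v ∈ U.filter (IsSource tl hd), b v) - (∑ v ∈ U.filter (IsSink tl hd), b v))
    (a : A) :
    ∃ x : A → ℤ, (∀ a', x a' = 0 ∨ x a' = 1) ∧ x a = 1 ∧
      ∀ v : V, ∑ a' ∈ deltaV tl hd v, x a' = b v := by
  classical
  -- basic structural facts
  have htl_src : ∀ a', IsSource tl hd (tl a') := fun a' =>
    (hbip (tl a')).resolve_right (fun h => h a' rfl)
  have hhd_sink : ∀ a', IsSink tl hd (hd a') := fun a' =>
    (hbip (hd a')).resolve_left (fun h => h a' rfl)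
  have h_nb : ∀ v, IsSource tl hd v → IsSink tl hd v → False := by
    intro v hsrc hsnk
    have h1 : ({v} : Finset V).Nonempty := Finset.singleton_nonempty v
    have h2 : ({v} : Finset V) ≠ Finset.univ := by
      intro h
      have : tl a ∈ ({v} : Finset V) := h ▸ Finset.mem_univ _
      exact hsnk a (Finset.mem_singleton.mp this)
    have h3 : deltaMinus tl hd {v} = ∅ := by
      apply Finset.eq_empty_of_forall_notMem
      intro a' ha'
      simp only [deltaMinus, Finset.mem_filter, Finset.mem_univ, true_and,
        Finset.mem_singleton] at ha'
      exact hsrc a' ha'.1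
    have hc := hcut {v} h1 h2 h3
    have e1 : Finset.filter (IsSource tl hd) {v} = {v} := by
      rw [Finset.filter_singleton, if_pos hsrc]
    have e2 : Finset.filter (IsSink tl hd) {v} = {v} := by
      rw [Finset.filter_singleton, if_pos hsnk]
    rw [e1, e2] at hc
    simp at hc
  set Sf := Finset.univ.filter (IsSource tl hd) with hSf
  set Tf := Finset.univ.filter (IsSink tl hd) with hTf
  have hbT_card : ∑ v ∈ Tf, b v = (Tf.card : ℤ) := by
    rw [Finset.sum_congr rfl (fun v hv => hbT v (Finset.mem_filter.mp hv).2)]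
    simp
    rfl
  have hu0S : tl a ∈ Sf := Finset.mem_filter.mpr ⟨Finset.mem_univ _, htl_src a⟩
  have ht0T : hd a ∈ Tf := Finset.mem_filter.mpr ⟨Finset.mem_univ _, hhd_sink a⟩
  set cap : V → ℕ := fun u => (b u - if u = tl a then 1 else 0).toNat with hcap
  have capZ : ∀ u, IsSource tl hd u →
      (cap u : ℤ) = b u - if u = tl a then 1 else 0 := by
    intro u hu
    have h1 := hbS u hu
    have h0 : (0:ℤ) ≤ b u - if u = tl a then 1 else 0 := by split <;> linarith
    simp only [hcap]
    exact Int.toNat_of_nonneg h0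
  -- the copies finsets
  set copies : V → Finset (V × ℕ) := fun u => (Finset.range (cap u)).image (fun n => (u, n))
    with hcopies
  have copies_card : ∀ u, (copies u).card = cap u := by
    intro u
    rw [hcopies]
    simp only []
    rw [Finset.card_image_of_injective _ (fun n m h => (Prod.ext_iff.mp h).2),
      Finset.card_range]
  have copies_mem : ∀ u (p : V × ℕ), p ∈ copies u ↔ p.1 = u ∧ p.2 < cap u := by
    intro u p
    rw [hcopies]
    simp only [Finset.mem_image, Finset.mem_range]
    constructor
    · rintro ⟨n, hn, rfl⟩; exact ⟨rfl, hn⟩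
    · rintro ⟨h1, h2⟩; exact ⟨p.2, h2, by rw [← h1]⟩
  have copies_disj : ∀ u u', u ≠ u' → Disjoint (copies u) (copies u') := by
    intro u u' huu
    rw [Finset.disjoint_left]
    intro p hp hp'
    exact huu (((copies_mem u p).mp hp).1.symm.trans ((copies_mem u' p).mp hp').1)
  -- in-neighbours of a vertex
  set nbr : V → Finset V := fun v => Sf.filter (fun u => ∃ a', tl a' = u ∧ hd a' = v)
    with hnbr
  -- the sinks (other than hd a) type
  set ι := {v : V // IsSink tl hd v ∧ v ≠ hd a} with hι
  set tfam : ι → Finset (V × ℕ) := fun w => (nbr w.1).biUnion copies with htfam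
  have hall : ∀ s : Finset ι, s.card ≤ (s.biUnion tfam).card := by
    intro s
    rcases s.eq_empty_or_nonempty with rfl | hs
    · simp
    set W : Finset V := s.image Subtype.val with hW
    set N : Finset V := s.biUnion (fun w => nbr w.1) with hN
    have hbu : s.biUnion tfam = N.biUnion copies := by
      rw [hN, Finset.biUnion_biUnion]
    have hNS : ∀ u ∈ N, IsSource tl hd u := by
      intro u hu
      obtain ⟨w, _, hw⟩ := Finset.mem_biUnion.mp hu
      exact (Finset.mem_filter.mp (Finset.mem_filter.mp hw).1).2
    have hNmem : ∀ u, u ∈ N ↔ u ∈ Sf ∧ ∃ a', tl a' = u ∧ hd a' ∈ W := by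
      intro u
      rw [hN]
      simp only [Finset.mem_biUnion, hnbr, Finset.mem_filter, hW, Finset.mem_image]
      constructor
      · rintro ⟨w, hws, ⟨hSf', a', h1, h2⟩⟩
        exact ⟨hSf', a', h1, ⟨w, hws, h2.symm ▸ rfl⟩⟩
      · rintro ⟨hSf', a', h1, h2⟩
        obtain ⟨w, hws, hw⟩ := h2
        exact ⟨w, hws, hSf', a', h1, hw.symm⟩
    have hWsink : ∀ v ∈ W, IsSink tl hd v := by
      intro v hv
      obtain ⟨w, _, hw⟩ := Finset.mem_image.mp hv
      exact hw ▸ w.2.1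
    have hcard : (N.biUnion copies).card = ∑ u ∈ N, cap u := by
      rw [Finset.card_biUnion (fun u _ u' _ h => copies_disj u u' h)]
      exact Finset.sum_congr rfl (fun u _ => copies_card u)
    -- apply the cut hypothesis to U = W ∪ N
    have hUne : (W ∪ N).Nonempty := by
      obtain ⟨w, hw⟩ := hs
      exact ⟨w.1, Finset.mem_union_left _ (Finset.mem_image.mpr ⟨w, hw, rfl⟩)⟩
    have hUnu : (W ∪ N) ≠ Finset.univ := by
      intro h
      have : hd a ∈ W ∪ N := h ▸ Finset.mem_univ _
      rcases Finset.mem_union.mp this with h' | h'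
      · obtain ⟨w, _, hw⟩ := Finset.mem_image.mp h'
        exact w.2.2 hw
      · exact h_nb (hd a) (hNS _ h') (hhd_sink a)
    have hUdm : deltaMinus tl hd (W ∪ N) = ∅ := by
      apply Finset.eq_empty_of_forall_notMem
      intro a' ha'
      simp only [deltaMinus, Finset.mem_filter, Finset.mem_univ, true_and] at ha'
      obtain ⟨hin, hout⟩ := ha'
      have hhdW : hd a' ∈ W := by
        rcases Finset.mem_union.mp hin with h' | h'
        · exact h'
        · exact absurd (hNS _ h') (fun hsrc => h_nb _ hsrc (hhd_sink a'))
      exact hout (Finset.mem_union_right _ ((hNmem (tl a')).mpr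
        ⟨Finset.mem_filter.mpr ⟨Finset.mem_univ _, htl_src a'⟩, a', rfl, hhdW⟩))
    have hc := hcut (W ∪ N) hUne hUnu hUdm
    have eS : (W ∪ N).filter (IsSource tl hd) = N := by
      ext u
      simp only [Finset.mem_filter, Finset.mem_union]
      constructor
      · rintro ⟨h1 | h1, h2⟩
        · exact absurd h2 (fun h => h_nb u h (hWsink u h1))
        · exact h1
      · intro h
        exact ⟨Or.inr h, hNS u h⟩
    have eT : (W ∪ N).filter (IsSink tl hd) = W := by
      ext u
      simp only [Finset.mem_filter, Finset.mem_union]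
      constructor
      · rintro ⟨h1 | h1, h2⟩
        · exact h1
        · exact absurd h2 (fun h => h_nb u (hNS u h1) h)
      · intro h
        exact ⟨Or.inl h, hWsink u h⟩
    have hWZ : ∑ v ∈ W, b v = (s.card : ℤ) := by
      rw [Finset.sum_congr rfl (fun v hv => hbT v (hWsink v hv))]
      have : W.card = s.card := Finset.card_image_of_injective s Subtype.val_injective
      simp [this]
    rw [eS, eT, hWZ] at hc
    have h2 : (∑ v ∈ N, b v) - 1 ≤ ∑ u ∈ N, (cap u : ℤ) := by
      have he : ∑ u ∈ N, (cap u : ℤ) = ∑ u ∈ N, (b u - if u = tl a then 1 else 0) :=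
        Finset.sum_congr rfl (fun u hu => capZ u (hNS u hu))
      rw [he, Finset.sum_sub_distrib, Finset.sum_ite_eq' N (tl a) (fun _ => (1:ℤ))]
      split <;> linarith
    have h3 : (s.card : ℤ) ≤ ((∑ u ∈ N, cap u : ℕ) : ℤ) := by push_cast; linarith
    rw [hbu, hcard]
    exact_mod_cast h3
  obtain ⟨f, hfinj, hfmem⟩ := (Finset.all_card_le_biUnion_card_iff_exists_injective tfam).mp hall
  set g : ι → V := fun w => (f w).1 with hg
  have hfw : ∀ w : ι, f w ∈ copies (g w) ∧ g w ∈ nbr w.1 := by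
    intro w
    have hm := hfmem w
    rw [htfam] at hm
    obtain ⟨u, hu, hp⟩ := Finset.mem_biUnion.mp hm
    have he : g w = u := ((copies_mem u (f w)).mp hp).1
    rw [he]
    exact ⟨hp, hu⟩
  have hgS : ∀ w : ι, g w ∈ Sf := fun w => (Finset.mem_filter.mp (hfw w).2).1
  have hg_src : ∀ w : ι, IsSource tl hd (g w) := fun w => (Finset.mem_filter.mp (hgS w)).2
  have harc : ∀ w : ι, ∃ a', tl a' = g w ∧ hd a' = w.1 :=
    fun w => (Finset.mem_filter.mp (hfw w).2).2
  choose F hF1 hF2 using harc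
  have hFinj : Function.Injective F := fun w w' h => Subtype.ext (by rw [← hF2 w, ← hF2 w', h])
  set c : V → ℕ := fun u => (Finset.univ.filter (fun w : ι => g w = u)).card with hc
  have c_le : ∀ u ∈ Sf, c u ≤ cap u := by
    intro u _
    rw [hc]
    simp only []
    rw [← copies_card u]
    apply Finset.card_le_card_of_injOn f
    · intro w hw
      have h1 := (hfw w).1
      rw [(Finset.mem_filter.mp hw).2] at h1
      exact h1
    · intro w _ w' _ h
      exact hfinj h
  have hsum_c : ∑ u ∈ Sf, c u = (Finset.univ : Finset ι).card := by
    rw [Finset.card_eq_sum_card_fiberwise (f := g) (t := Sf) (fun w _ => hgS w)]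
  have hcard_univ : (((Finset.univ : Finset ι)).card : ℤ) = (Tf.card : ℤ) - 1 := by
    have he : (Finset.univ : Finset ι).card = (Tf.erase (hd a)).card := by
      apply Finset.card_bij (fun (w : ι) _ => w.1)
      · intro w _
        exact Finset.mem_erase.mpr ⟨w.2.2, Finset.mem_filter.mpr ⟨Finset.mem_univ _, w.2.1⟩⟩
      · intro w _ w' _ h
        exact Subtype.ext h
      · intro v hv
        obtain ⟨h1, h2⟩ := Finset.mem_erase.mp hv
        exact ⟨⟨v, (Finset.mem_filter.mp h2).2, h1⟩, Finset.mem_univ _, rfl⟩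
    rw [he, Finset.card_erase_of_mem ht0T]
    have h1 : 1 ≤ Tf.card := Finset.card_pos.mpr ⟨hd a, ht0T⟩
    omega
  have hsum_cap : ∑ u ∈ Sf, (cap u : ℤ) = (Tf.card : ℤ) - 1 := by
    have he : ∑ u ∈ Sf, (cap u : ℤ) = ∑ u ∈ Sf, (b u - if u = tl a then 1 else 0) :=
      Finset.sum_congr rfl (fun u hu => capZ u ((Finset.mem_filter.mp hu).2))
    rw [he, Finset.sum_sub_distrib, Finset.sum_ite_eq' Sf (tl a) (fun _ => (1:ℤ)),
      if_pos hu0S, hbal, hbT_card]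
  have hceq : ∀ u ∈ Sf, c u = cap u := by
    have hsums : ∑ u ∈ Sf, c u = ∑ u ∈ Sf, cap u := by
      have h1 : ((∑ u ∈ Sf, c u : ℕ) : ℤ) = ((∑ u ∈ Sf, cap u : ℕ) : ℤ) := by
        calc ((∑ u ∈ Sf, c u : ℕ) : ℤ) = (((Finset.univ : Finset ι)).card : ℤ) := by
              rw [hsum_c]
          _ = (Tf.card : ℤ) - 1 := hcard_univ
          _ = ∑ u ∈ Sf, (cap u : ℤ) := hsum_cap.symm
          _ = ((∑ u ∈ Sf, cap u : ℕ) : ℤ) := by push_cast; ring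
      exact_mod_cast h1
    exact fun u hu => (Finset.sum_eq_sum_iff_of_le c_le).mp hsums u hu
  -- the chosen arcs
  set chosen : Finset A := insert a (Finset.univ.image F) with hchosen
  have haF : ∀ w : ι, F w ≠ a := by
    intro w h
    exact w.2.2 (by rw [← hF2 w, h])
  have hFne : a ∉ Finset.univ.image F := by
    simp only [Finset.mem_image]
    rintro ⟨w, -, hw⟩
    exact haF w hw
  refine ⟨fun a' => if a' ∈ chosen then 1 else 0,
    fun a' => by by_cases h : a' ∈ chosen <;> simp [h],
    by simp [hchosen], ?_⟩
  intro v
  rw [Finset.sum_boole]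
  rcases hbip v with hsrc | hsnk
  · -- v is a source
    have e1 : (deltaV tl hd v).filter (fun a' => a' ∈ chosen)
        = chosen.filter (fun a' => tl a' = v) := by
      ext a'
      simp only [deltaV, Finset.mem_filter, Finset.mem_univ, true_and]
      constructor
      · rintro ⟨h1 | h1, h2⟩
        · exact ⟨h2, h1⟩
        · exact absurd h1 (hsrc a')
      · rintro ⟨h1, h2⟩
        exact ⟨Or.inl h2, h1⟩
    have e2 : (Finset.univ.image F).filter (fun a' => tl a' = v)
        = (Finset.univ.filter (fun w : ι => g w = v)).image F := by
      rw [Finset.filter_image]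
      congr 1
      apply Finset.filter_congr
      intro w _
      rw [hF1 w]
    have e3 : (chosen.filter (fun a' => tl a' = v)).card
        = (if tl a = v then 1 else 0) + c v := by
      rw [hchosen, Finset.filter_insert]
      by_cases hv : tl a = v
      · rw [if_pos hv, if_pos hv,
          Finset.card_insert_of_notMem (fun h => hFne (Finset.mem_filter.mp h).1), e2,
          Finset.card_image_of_injective _ hFinj]
        simp only [hc]
        omega
      · rw [if_neg hv, if_neg hv, e2, Finset.card_image_of_injective _ hFinj]
        simp only [hc]
        omega
    have hbv : (c v : ℤ) = b v - if v = tl a then 1 else 0 := by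
      rw [hceq v (Finset.mem_filter.mpr ⟨Finset.mem_univ _, hsrc⟩)]
      exact capZ v hsrc
    rw [e1, e3]
    rcases eq_or_ne v (tl a) with hv | hv
    · rw [if_pos hv] at hbv
      rw [if_pos hv.symm]
      push_cast
      linarith
    · rw [if_neg hv] at hbv
      rw [if_neg (fun h => hv h.symm)]
      push_cast
      linarith
  · -- v is a sink
    by_cases hv : v = hd a
    · have e : (deltaV tl hd v).filter (fun a' => a' ∈ chosen) = {a} := by
        ext a'
        simp only [deltaV, Finset.mem_filter, Finset.mem_univ, true_and, Finset.mem_singleton]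
        constructor
        · rintro ⟨h1, h2⟩
          rw [hchosen] at h2
          rcases Finset.mem_insert.mp h2 with h3 | h3
          · exact h3
          · obtain ⟨w, -, hw⟩ := Finset.mem_image.mp h3
            exfalso
            rcases h1 with h1 | h1
            · exact hsnk a' h1
            · apply w.2.2
              rw [← hF2 w, hw, h1]
              exact hv
        · rintro rfl
          exact ⟨Or.inr hv.symm, Finset.mem_insert_self _ _⟩
      rw [e]
      simp [hbT v hsnk]
    · set w0 : ι := ⟨v, hsnk, hv⟩ with hw0
      have e : (deltaV tl hd v).filter (fun a' => a' ∈ chosen) = {F w0} := by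
        ext a'
        simp only [deltaV, Finset.mem_filter, Finset.mem_univ, true_and, Finset.mem_singleton]
        constructor
        · rintro ⟨h1, h2⟩
          have hhd : hd a' = v := by
            rcases h1 with h1 | h1
            · exact absurd h1 (hsnk a')
            · exact h1
          rw [hchosen] at h2
          rcases Finset.mem_insert.mp h2 with h3 | h3
          · exfalso
            apply hv
            rw [← hhd, h3]
          · obtain ⟨w, -, hw⟩ := Finset.mem_image.mp h3
            have hwv : w = w0 := by
              apply Subtype.ext
              rw [hw0]
              show w.1 = v
              rw [← hF2 w, hw, hhd]
            rw [← hw, hwv]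
        · rintro rfl
          refine ⟨Or.inr (hF2 w0), ?_⟩
          rw [hchosen]
          exact Finset.mem_insert_of_mem (Finset.mem_image.mpr ⟨w0, Finset.mem_univ _, rfl⟩)
      rw [e]
      simp [hbT v hsnk]
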